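/- arXiv:2512.20737 — 6 statements merged into one kernel-verified Lean document; each statement's English description precedes it below -/
import Mathlib

section
/- The polynomial ψ satisfies ∫₀¹ ψ(x) p(x) dx = 0 for every polynomial p of degree at most k with p(0) = p(1) = 0. -/
open Polynomial intervalIntegral

private lemma pint (g : Polynomial ℝ) :
    ∫ x in (0:ℝ)..1, (derivative g).eval x = g.eval 1 - g.eval 0 := by
  exact intervalIntegral.integral_eq_sub_of_hasDerivAt (fun x _ => g.hasDerivAt x)
    (((derivative g).continuous_aeval).intervalIntegrable 0 1)

private lemma ibp (g q : Polynomial ℝ) (h0 : g.eval 0 = 0) (h1 : g.eval 1 = 0) :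
    ∫ x in (0:ℝ)..1, (derivative g).eval x * q.eval x
      = - ∫ x in (0:ℝ)..1, g.eval x * (derivative q).eval x := by
  have h := pint (g * q)
  have hint1 : IntervalIntegrable (fun x => (derivative g).eval x * q.eval x)
      MeasureTheory.volume 0 1 :=
    (((derivative g).continuous_aeval).mul (q.continuous_aeval)).intervalIntegrable 0 1
  have hint2 : IntervalIntegrable (fun x => g.eval x * (derivative q).eval x)
      MeasureTheory.volume 0 1 :=
    ((g.continuous_aeval).mul ((derivative q).continuous_aeval)).intervalIntegrable 0 1
  have hsum : (∫ x in (0:ℝ)..1, (derivative (g*q)).eval x)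
      = (∫ x in (0:ℝ)..1, (derivative g).eval x * q.eval x)
        + ∫ x in (0:ℝ)..1, g.eval x * (derivative q).eval x := by
    rw [← intervalIntegral.integral_add hint1 hint2]
    simp only [derivative_mul, eval_add, eval_mul]
  rw [hsum, eval_mul, eval_mul, h0, h1] at h
  linarith

private lemma ibp_iter : ∀ (n : ℕ) (g q : Polynomial ℝ),
    (∀ j < n, (derivative^[j] g).eval 0 = 0 ∧ (derivative^[j] g).eval 1 = 0) →
    ∫ x in (0:ℝ)..1, (derivative^[n] g).eval x * q.eval x
      = (-1)^n * ∫ x in (0:ℝ)..1, g.eval x * (derivative^[n] q).eval x := by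
  intro n
  induction n with
  | zero => intro g q _; simp
  | succ n ih =>
    intro g q h
    have h0 := h 0 (Nat.succ_pos n)
    simp only [Function.iterate_zero, id_eq] at h0
    rw [Function.iterate_succ_apply]
    rw [ih (derivative g) q (fun j hj => by
      rw [← Function.iterate_succ_apply]
      exact h (j+1) (by omega))]
    rw [ibp g (derivative^[n] q) h0.1 h0.2,
      show derivative (derivative^[n] q) = derivative^[n+1] q from
        (Function.iterate_succ_apply' _ n q).symm]
    ring

private lemma dvd_deriv {a : ℝ} {m : ℕ} {g : Polynomial ℝ}
    (h : (X - C a)^(m+1) ∣ g) : (X - C a)^m ∣ derivative g := by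
  obtain ⟨u, rfl⟩ := h
  rw [derivative_mul, derivative_pow, derivative_sub, derivative_X, derivative_C, sub_zero]
  refine dvd_add ?_ ?_
  · exact ⟨C ((m:ℝ)+1) * u, by push_cast; ring⟩
  · exact ⟨(X - C a) * derivative u, by ring⟩

private lemma f_dvd (k : ℕ) : ∀ j, ((X:Polynomial ℝ)^(k+1-j) ∣
      derivative^[j] (X^(k+1) * (1-X)^k))
    ∧ (((X:Polynomial ℝ) - C 1)^(k-j) ∣ derivative^[j] (X^(k+1) * (1-X)^k)) := by
  intro j
  induction j with
  | zero =>
    simp only [Nat.sub_zero, Function.iterate_zero, id_eq]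
    constructor
    · simpa using Dvd.intro _ rfl
    · refine ⟨X^(k+1) * (-1)^k, ?_⟩
      have h1 : ((1:Polynomial ℝ) - X)^k = (X - C 1)^k * (-1)^k := by
        rw [← neg_sub]
        rw [neg_pow]
        simp [mul_comm]
      rw [h1]; ring
  | succ j ih =>
    rw [Function.iterate_succ_apply']
    constructor
    · rcases le_or_gt (k+1) (j+1) with hj | hj
      · simpa [Nat.sub_eq_zero_of_le hj] using one_dvd _
      · have he : k+1-j = (k+1-(j+1)) + 1 := by omega
        have h1 : ((X:Polynomial ℝ) - C 0)^((k+1-(j+1))+1) ∣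
            derivative^[j] (X^(k+1) * (1-X)^k) := by
          rw [← he]; simpa using ih.1
        have := dvd_deriv h1
        simpa using this
    · rcases le_or_gt k (j+1) with hj | hj
      · simpa [Nat.sub_eq_zero_of_le hj] using one_dvd _
      · have he : k-j = (k-(j+1)) + 1 := by omega
        have h1 : ((X:Polynomial ℝ) - C 1)^((k-(j+1))+1) ∣
            derivative^[j] (X^(k+1) * (1-X)^k) := by
          rw [← he]; exact ih.2
        exact dvd_deriv h1

/-- ψ satisfies ∫₀¹ ψ(x) p(x) dx = 0 for every polynomial p of
degree at most k with p(0) = p(1) = 0, where ψ is the polynomial with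
k!·x(1-x)·ψ(x) = d^{k-1}/dx^{k-1}[x^{k+1}(1-x)^k]. -/
theorem stmt_1 (k : ℕ) (hk : 1 ≤ k) (ψ : Polynomial ℝ)
    (hψ : (C (k.factorial : ℝ)) * (X * (1 - X)) * ψ =
        Polynomial.derivative^[k - 1] (X ^ (k + 1) * (1 - X) ^ k)) :
    ∀ p : Polynomial ℝ, p.degree ≤ (k : WithBot ℕ) → p.eval 0 = 0 → p.eval 1 = 0 →
      ∫ x in (0:ℝ)..1, ψ.eval x * p.eval x = 0 := by
  intro p hp h0 h1
  -- factor p = (X - 1) * (X * q)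
  obtain ⟨r, hr⟩ := dvd_iff_isRoot.mpr (show IsRoot p 1 from h1)
  have hr0 : r.eval 0 = 0 := by
    rw [hr] at h0
    simp only [eval_mul, eval_sub, eval_X, eval_C] at h0
    linarith [h0]
  have hXr : (X : Polynomial ℝ) ∣ r := X_dvd_iff.mpr (by rw [coeff_zero_eq_eval_zero]; exact hr0)
  obtain ⟨q, hq⟩ := hXr
  -- D^[k-1] q = 0
  have hDq : derivative^[k-1] q = 0 := by
    by_cases hq0 : q = 0
    · simp [hq0]
    · apply iterate_derivative_eq_zero
      have hpk : p.natDegree ≤ k := natDegree_le_iff_degree_le.mpr hp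
      rw [hr, hq] at hpk
      rw [natDegree_mul (X_sub_C_ne_zero 1) (mul_ne_zero X_ne_zero hq0),
        natDegree_mul X_ne_zero hq0, natDegree_X_sub_C, natDegree_X] at hpk
      omega
  -- endpoint vanishing of iterated derivatives
  have hvan : ∀ j < k-1, (derivative^[j] ((X:Polynomial ℝ)^(k+1) * (1-X)^k)).eval 0 = 0
      ∧ (derivative^[j] ((X:Polynomial ℝ)^(k+1) * (1-X)^k)).eval 1 = 0 := by
    intro j hj
    obtain ⟨hd1, hd2⟩ := f_dvd k j
    constructor
    · obtain ⟨u, hu⟩ := dvd_trans (dvd_pow_self (X:Polynomial ℝ) (by omega)) hd1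
      rw [hu]; simp
    · obtain ⟨u, hu⟩ := dvd_trans (dvd_pow_self ((X:Polynomial ℝ) - C 1) (by omega)) hd2
      rw [hu]; simp
  have key := ibp_iter (k-1) ((X:Polynomial ℝ)^(k+1) * (1-X)^k) (-q) hvan
  have hDnq : derivative^[k-1] (-q) = 0 := by
    rw [iterate_derivative_neg, hDq, neg_zero]
  rw [hDnq] at key
  simp only [eval_zero, mul_zero, intervalIntegral.integral_zero] at key
  -- pointwise identity
  have hpt : ∀ x : ℝ, (derivative^[k-1] ((X:Polynomial ℝ)^(k+1) * (1-X)^k)).eval x * (-q).eval x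
      = (k.factorial : ℝ) * (ψ.eval x * p.eval x) := by
    intro x
    rw [← hψ, hr, hq]
    simp only [eval_mul, eval_sub, eval_neg, eval_X, eval_C, eval_one]
    ring
  have hfac : (k.factorial : ℝ) ≠ 0 := Nat.cast_ne_zero.mpr k.factorial_ne_zero
  have h2 : (k.factorial:ℝ) * ∫ x in (0:ℝ)..1, ψ.eval x * p.eval x = 0 := by
    rw [← intervalIntegral.integral_const_mul]
    simp only [← hpt]
    exact key
  exact (mul_eq_zero.mp h2).resolve_left hfac
end

section
/- If k is odd, then ∫₀¹ ψ(x)² dx = 1/(k(k+2)). -/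
open Polynomial intervalIntegral
private lemma pint_s2 (p : Polynomial ℝ) :
    IntervalIntegrable (fun x => p.eval x) MeasureTheory.volume 0 1 :=
  p.continuous.intervalIntegrable _ _

private lemma ftc_poly (p : Polynomial ℝ) :
    ∫ x in (0:ℝ)..1, (derivative p).eval x = p.eval 1 - p.eval 0 := by
  exact intervalIntegral.integral_eq_sub_of_hasDerivAt (f := fun x => p.eval x)
    (fun x _ => p.hasDerivAt x) (pint_s2 _)

private lemma eval_zero_iter_deriv (p : Polynomial ℝ) (m : ℕ) :
    (derivative^[m] p).eval 0 = (m.factorial : ℝ) * p.coeff m := by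
  rw [← coeff_zero_eq_eval_zero, coeff_iterate_derivative]
  simp [Nat.descFactorial_self, mul_comm]

private lemma momZ (k : ℕ) (f : Polynomial ℝ)
    (h1 : ∀ m, m ≤ k → (derivative^[m] f).eval 1 = 0)
    (h0 : ∀ m, m < k → (derivative^[m] f).eval 0 = 0)
    (h0k : (derivative^[k] f).eval 0 = (k.factorial : ℝ)) :
    ∀ j m : ℕ, j ≤ m → m ≤ k →
      (∫ x in (0:ℝ)..1, x ^ j * (derivative^[m+1] f).eval x)
        = if j = 0 ∧ m = k then -(k.factorial : ℝ) else 0 := by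
  intro j
  induction j with
  | zero =>
    intro m _ hm
    have key : ∫ x in (0:ℝ)..1, x ^ 0 * (derivative^[m+1] f).eval x
        = (derivative^[m] f).eval 1 - (derivative^[m] f).eval 0 := by
      simp only [pow_zero, one_mul]
      rw [Function.iterate_succ_apply' derivative m f]
      exact ftc_poly _
    rw [key, h1 m hm]
    rcases eq_or_lt_of_le hm with h | h
    · simp [h, h0k]
    · simp [h0 m h, Nat.ne_of_lt h]
  | succ j ih =>
    intro m hj hm
    obtain ⟨n, rfl⟩ : ∃ n, m = n + 1 := ⟨m - 1, by omega⟩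
    set q : Polynomial ℝ := derivative^[n+1] f with hq
    have hfun : ∀ x : ℝ, x ^ (j+1) * (derivative^[n+1+1] f).eval x
        = (derivative (X ^ (j+1) * q)).eval x - ((j:ℝ)+1) * (x ^ j * q.eval x) := by
      intro x
      rw [Function.iterate_succ_apply' derivative (n+1) f]
      simp only [derivative_mul, derivative_X_pow, eval_add, eval_mul, eval_pow, eval_X,
        eval_natCast, eval_C, Nat.cast_add, Nat.cast_one, Nat.add_sub_cancel, ← hq]
      ring
    rw [intervalIntegral.integral_congr (g := fun x =>
        (derivative (X ^ (j+1) * q)).eval x - ((j:ℝ)+1) * (x ^ j * q.eval x))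
        (fun x _ => hfun x)]
    have hint1 : IntervalIntegrable (fun x => (derivative (X ^ (j+1) * q)).eval x)
        MeasureTheory.volume 0 1 := pint_s2 _
    have hint2 : IntervalIntegrable (fun x : ℝ => ((j:ℝ)+1) * (x ^ j * q.eval x))
        MeasureTheory.volume 0 1 :=
      (Continuous.mul continuous_const ((continuous_pow j).mul q.continuous)).intervalIntegrable _ _
    rw [intervalIntegral.integral_sub hint1 hint2, ftc_poly, intervalIntegral.integral_const_mul,
      ih n (by omega) (by omega)]
    have hbne : ¬ (j = 0 ∧ n = k) := by omega
    rw [if_neg hbne]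
    have he1 : (X ^ (j+1) * q).eval 1 = 0 := by
      rw [eval_mul, hq, h1 (n+1) hm, mul_zero]
    have he0 : (X ^ (j+1) * q).eval 0 = 0 := by simp
    rw [he1, he0]
    simp


/-- If k is odd, then ∫₀¹ ψ(x)² dx = 1/(k(k+2)), where ψ is the
degree-k polynomial with ψ(0)=0, ψ(1)=1 that is L²(0,1)-orthogonal to all
polynomials of degree ≤ k vanishing at both endpoints. -/
theorem stmt_2 (k : ℕ) (hk : Odd k) (ψ : Polynomial ℝ)
    (hdeg : ψ.degree = (k : WithBot ℕ)) (h0 : ψ.eval 0 = 0) (h1 : ψ.eval 1 = 1)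
    (horth : ∀ p : Polynomial ℝ, p.degree ≤ (k : WithBot ℕ) → p.eval 0 = 0 → p.eval 1 = 0 →
      ∫ x in (0:ℝ)..1, ψ.eval x * p.eval x = 0) :
    ∫ x in (0:ℝ)..1, (ψ.eval x) ^ 2 = 1 / ((k : ℝ) * (k + 2)) := by
  have hk1 : 1 ≤ k := hk.pos
  have hκge : (1:ℝ) ≤ (k:ℝ) := by exact_mod_cast hk1
  set q : Polynomial ℝ := (1 - X) ^ (k+1) with hqdef
  set F : Polynomial ℝ := X ^ k * q with hFdef
  set r : Polynomial ℝ := (1 - X) ^ k with hrdef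
  set G : Polynomial ℝ := X ^ (k+1) * r with hGdef
  have hlin : (1 - X : Polynomial ℝ).natDegree = 1 := by
    have h : (1 - X : Polynomial ℝ) = -(X - C 1) := by rw [C_1]; ring
    rw [h, natDegree_neg, natDegree_X_sub_C]
  -- coefficients
  have hFc : ∀ m, F.coeff m = if k ≤ m then q.coeff (m - k) else 0 := by
    intro m; rw [hFdef, mul_comm, coeff_mul_X_pow']
  have hGc : ∀ m, G.coeff m = if k+1 ≤ m then r.coeff (m - (k+1)) else 0 := by
    intro m; rw [hGdef, mul_comm, coeff_mul_X_pow']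
  have hq0 : q.coeff 0 = 1 := by
    rw [coeff_zero_eq_eval_zero]; simp [hqdef]
  have hq1 : q.coeff 1 = -((k:ℝ)+1) := by
    have hd : q.coeff 1 = (derivative q).coeff 0 := by
      rw [coeff_derivative]; push_cast; ring
    rw [hd, coeff_zero_eq_eval_zero, hqdef, derivative_pow]
    simp
  have hr0 : r.coeff 0 = 1 := by rw [coeff_zero_eq_eval_zero]; simp [hrdef]
  -- values at 0
  have hF0 : ∀ m, m < k → (derivative^[m] F).eval 0 = 0 := by
    intro m hm; rw [eval_zero_iter_deriv, hFc m, if_neg (by omega), mul_zero]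
  have hF0k : (derivative^[k] F).eval 0 = (k.factorial : ℝ) := by
    rw [eval_zero_iter_deriv, hFc k, if_pos le_rfl, Nat.sub_self, hq0, mul_one]
  have hF0k1 : (derivative^[k+1] F).eval 0 = -(((k+1).factorial : ℝ) * ((k:ℝ)+1)) := by
    rw [eval_zero_iter_deriv, hFc (k+1), if_pos (by omega), Nat.add_sub_cancel_left, hq1]
    ring
  -- composition with 1 - X
  have hcomp : F.comp (1 - X) = G := by
    simp only [hFdef, hGdef, hqdef, hrdef, mul_comp, pow_comp, sub_comp, one_comp, X_comp]
    ring
  -- values at 1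
  have hE1 : ∀ m, (derivative^[m] F).eval 1 = (-1:ℝ)^m * (m.factorial : ℝ) * G.coeff m := by
    intro m
    have h := iterate_derivative_comp_one_sub_X (p := F) (k := m)
    rw [hcomp] at h
    have h' := congrArg (eval (0:ℝ)) h
    rw [eval_zero_iter_deriv] at h'
    simp only [eval_mul, eval_pow, eval_neg, eval_one, eval_comp, eval_sub, eval_X, sub_zero] at h'
    have hsq : ((-1:ℝ)^m) * ((-1:ℝ)^m) = 1 := by
      rw [← pow_add, ← two_mul, pow_mul]; norm_num
    linear_combination (-((-1:ℝ)^m)) * h' - ((derivative^[m] F).eval 1) * hsq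
  have hF1 : ∀ m, m ≤ k → (derivative^[m] F).eval 1 = 0 := by
    intro m hm; rw [hE1 m, hGc m, if_neg (by omega), mul_zero]
  have hEven : Even (k+1) := hk.add_one
  have hF1k1 : (derivative^[k+1] F).eval 1 = ((k+1).factorial : ℝ) := by
    rw [hE1 (k+1), hGc (k+1), if_pos le_rfl, Nat.sub_self, hr0, hEven.neg_one_pow]
    ring
  -- moments of the (k+1)-st derivative of F
  have hmomF : ∀ j, j ≤ k → (∫ x in (0:ℝ)..1, x ^ j * (derivative^[k+1] F).eval x)
      = if j = 0 then -(k.factorial : ℝ) else 0 := by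
    intro j hj
    rw [momZ k F hF1 hF0 hF0k j k hj le_rfl]
    simp
  -- the reproducing polynomial v
  set v : Polynomial ℝ := C (-((k.factorial : ℝ))⁻¹) * derivative^[k+1] F with hvdef
  have hkf : ((k.factorial : ℝ)) ≠ 0 := by
    exact_mod_cast k.factorial_ne_zero
  have hvmom : ∀ j, j ≤ k → (∫ x in (0:ℝ)..1, x ^ j * v.eval x) = if j = 0 then 1 else 0 := by
    intro j hj
    have hrw : ∀ x:ℝ, x ^ j * v.eval x
        = (-((k.factorial : ℝ))⁻¹) * (x ^ j * (derivative^[k+1] F).eval x) := by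
      intro x; rw [hvdef, eval_mul, eval_C]; ring
    rw [intervalIntegral.integral_congr (fun x _ => hrw x),
      intervalIntegral.integral_const_mul, hmomF j hj]
    by_cases hcase : j = 0
    · rw [if_pos hcase, if_pos hcase]; field_simp
    · rw [if_neg hcase, if_neg hcase, mul_zero]
  have hv0 : v.eval 0 = ((k:ℝ)+1)^2 := by
    rw [hvdef, eval_mul, eval_C, hF0k1, Nat.factorial_succ]
    push_cast
    field_simp
  have hv1 : v.eval 1 = -((k:ℝ)+1) := by
    rw [hvdef, eval_mul, eval_C, hF1k1, Nat.factorial_succ]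
    push_cast
    field_simp
  have hFdeg : F.natDegree ≤ 2*k+1 := by
    refine le_trans natDegree_mul_le ?_
    have e1 : (X ^ k : Polynomial ℝ).natDegree = k := natDegree_X_pow k
    have e2 : q.natDegree ≤ k+1 := by
      rw [hqdef]
      refine le_trans (natDegree_pow_le) ?_
      rw [hlin, mul_one]
    omega
  have hvdeg : v.natDegree ≤ k := by
    refine le_trans (natDegree_C_mul_le _ _) ?_
    have := natDegree_iterate_derivative F (k+1)
    omega
  -- reproducing property
  have hγ : ∀ p : Polynomial ℝ, p.natDegree ≤ k →
      (∫ x in (0:ℝ)..1, p.eval x * v.eval x) = p.eval 0 := by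
    intro p hp
    have hrw : ∀ x:ℝ, p.eval x * v.eval x
        = ∑ i ∈ Finset.range (k+1), p.coeff i * (x ^ i * v.eval x) := by
      intro x
      rw [eval_eq_sum_range' (Nat.lt_succ_of_le hp), Finset.sum_mul]
      exact Finset.sum_congr rfl fun i _ => by ring
    rw [intervalIntegral.integral_congr (fun x _ => hrw x)]
    rw [intervalIntegral.integral_finset_sum]
    · have hterm : ∀ i ∈ Finset.range (k+1),
          (∫ x in (0:ℝ)..1, p.coeff i * (x ^ i * v.eval x))
            = p.coeff i * (if i = 0 then 1 else 0) := by
        intro i hi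
        rw [intervalIntegral.integral_const_mul,
          hvmom i (Nat.lt_succ_iff.mp (Finset.mem_range.mp hi))]
      rw [Finset.sum_congr rfl hterm]
      simp only [mul_ite, mul_one, mul_zero, Finset.sum_ite_eq', Finset.mem_range,
        if_pos (Nat.succ_pos k)]
      exact coeff_zero_eq_eval_zero p
    · intro i _
      exact (Continuous.mul continuous_const
        ((continuous_pow i).mul v.continuous)).intervalIntegrable _ _
  -- the linear functional given by orthogonality
  set A : ℝ := ∫ x in (0:ℝ)..1, ψ.eval x * x with hAdef
  set B : ℝ := ∫ x in (0:ℝ)..1, ψ.eval x * (1 - x) with hBdef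
  have hψdeg : ψ.natDegree = k := natDegree_eq_of_degree_eq_some hdeg
  have hfunc : ∀ p : Polynomial ℝ, p.natDegree ≤ k →
      (∫ x in (0:ℝ)..1, ψ.eval x * p.eval x) = p.eval 0 * B + p.eval 1 * A := by
    intro p hp
    set w : Polynomial ℝ := p - C (p.eval 0) * (1 - X) - C (p.eval 1) * X with hwdef
    have hwdeg : w.degree ≤ (k : WithBot ℕ) := by
      rw [← natDegree_le_iff_degree_le]
      refine le_trans (natDegree_sub_le _ _) ?_
      rw [max_le_iff]
      constructor
      · refine le_trans (natDegree_sub_le _ _) ?_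
        rw [max_le_iff]
        refine ⟨hp, ?_⟩
        refine le_trans (natDegree_C_mul_le _ _) ?_
        rw [hlin]; omega
      · refine le_trans (natDegree_C_mul_le _ _) ?_
        rw [natDegree_X]; omega
    have hw0 : w.eval 0 = 0 := by simp [hwdef]
    have hw1 : w.eval 1 = 0 := by simp [hwdef]
    have horth' := horth w hwdeg hw0 hw1
    have hrw : ∀ x:ℝ, ψ.eval x * w.eval x
        = ψ.eval x * p.eval x - p.eval 0 * (ψ.eval x * (1-x)) - p.eval 1 * (ψ.eval x * x) := by
      intro x
      rw [hwdef]
      simp only [eval_sub, eval_mul, eval_C, eval_one, eval_X]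
      ring
    rw [intervalIntegral.integral_congr (fun x _ => hrw x)] at horth'
    have i1 : IntervalIntegrable (fun x => ψ.eval x * p.eval x) MeasureTheory.volume 0 1 :=
      (ψ.continuous.mul p.continuous).intervalIntegrable _ _
    have i2 : IntervalIntegrable (fun x:ℝ => p.eval 0 * (ψ.eval x * (1-x)))
        MeasureTheory.volume 0 1 :=
      (continuous_const.mul (ψ.continuous.mul
        (continuous_const.sub continuous_id))).intervalIntegrable _ _
    have i3 : IntervalIntegrable (fun x:ℝ => p.eval 1 * (ψ.eval x * x))
        MeasureTheory.volume 0 1 :=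
      (continuous_const.mul (ψ.continuous.mul continuous_id)).intervalIntegrable _ _
    rw [intervalIntegral.integral_sub (i1.sub i2) i3, intervalIntegral.integral_sub i1 i2,
      intervalIntegral.integral_const_mul, intervalIntegral.integral_const_mul] at horth'
    rw [← hAdef, ← hBdef] at horth'
    linarith [horth']
  -- first equation, from ψ(0) = 0
  have eqψ0 : v.eval 0 * B + v.eval 1 * A = 0 := by
    rw [← hfunc v hvdeg, hγ ψ hψdeg.le, h0]
  -- second equation, from ψ(1) = 1
  set u : Polynomial ℝ := v.comp (1 - X) with hudef
  have hudeg : u.natDegree ≤ k := by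
    refine le_trans natDegree_comp_le ?_
    rw [hlin, mul_one]; exact hvdeg
  have hu0 : u.eval 0 = v.eval 1 := by simp [hudef, eval_comp]
  have hu1 : u.eval 1 = v.eval 0 := by simp [hudef, eval_comp]
  have hψcompdeg : (ψ.comp (1 - X)).natDegree ≤ k := by
    refine le_trans natDegree_comp_le ?_
    rw [hlin, mul_one, hψdeg]
  have eqψ1 : v.eval 1 * B + v.eval 0 * A = 1 := by
    have h2 : (∫ x in (0:ℝ)..1, ψ.eval x * u.eval x) = 1 := by
      have hsub : ∀ x:ℝ, ψ.eval x * u.eval x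
          = (fun y => (ψ.comp (1-X)).eval y * v.eval y) (1 - x) := by
        intro x
        simp only [hudef, eval_comp, eval_sub, eval_one, eval_X]
        norm_num
      rw [intervalIntegral.integral_congr (fun x _ => hsub x),
        intervalIntegral.integral_comp_sub_left (fun y => (ψ.comp (1-X)).eval y * v.eval y) 1]
      norm_num
      have hback : ∀ x:ℝ, eval (1-x) ψ * eval x v = (ψ.comp (1-X)).eval x * v.eval x := by
        intro x; rw [eval_comp]; norm_num
      rw [intervalIntegral.integral_congr (fun x _ => hback x), hγ _ hψcompdeg]
      simp [eval_comp, h1]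
    rw [← hu0, ← hu1, ← hfunc u hudeg, h2]
  -- the integral of ψ² equals A
  have eqA : (∫ x in (0:ℝ)..1, (ψ.eval x)^2) = A := by
    have hsq : ∀ x:ℝ, (ψ.eval x)^2 = ψ.eval x * ψ.eval x := fun x => sq _
    rw [intervalIntegral.integral_congr (fun x _ => hsq x), hfunc ψ hψdeg.le, h0, h1]
    ring
  rw [eqA]
  rw [hv0, hv1] at eqψ0 eqψ1
  have hκ0 : (0:ℝ) < (k:ℝ) := by linarith
  have hκ1 : ((k:ℝ) + 1) ≠ 0 := by positivity
  have hden : ((k:ℝ)) * ((k:ℝ) + 2) ≠ 0 := by positivity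
  have key : (((k:ℝ)+1)^2) * (A * (((k:ℝ)) * ((k:ℝ)+2))) = (((k:ℝ)+1)^2) * 1 := by
    linear_combination (((k:ℝ)+1)^2) * eqψ1 + (((k:ℝ)+1)) * eqψ0
  have hA : A * (((k:ℝ)) * ((k:ℝ)+2)) = 1 := mul_left_cancel₀ (pow_ne_zero 2 hκ1) key
  rw [eq_div_iff hden]
  linarith [hA]
end

section
/- If k is odd, then ∫₀¹ ψ(x) ψ(1-x) dx = 1/(k(k+1)(k+2)). -/
open Polynomial intervalIntegral


lemma intIntegrable (p : Polynomial ℝ) (a b : ℝ) :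
    IntervalIntegrable (fun x => p.eval x) MeasureTheory.volume a b :=
  p.continuous.intervalIntegrable a b

lemma poly_ftc (p : Polynomial ℝ) (a b : ℝ) :
    ∫ x in a..b, (derivative p).eval x = p.eval b - p.eval a := by
  refine intervalIntegral.integral_eq_sub_of_hasDerivAt (fun x _ => p.hasDerivAt x) ?_
  exact intIntegrable _ a b

lemma parts_one (A B : Polynomial ℝ) :
    ∫ x in (0:ℝ)..1, (derivative A).eval x * B.eval x =
      A.eval 1 * B.eval 1 - A.eval 0 * B.eval 0
        - ∫ x in (0:ℝ)..1, A.eval x * (derivative B).eval x := by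
  have h := poly_ftc (A * B) 0 1
  rw [derivative_mul] at h
  have h2 : (∫ x in (0:ℝ)..1, ((derivative A * B).eval x + (A * derivative B).eval x))
      = (∫ x in (0:ℝ)..1, (derivative A * B).eval x)
        + ∫ x in (0:ℝ)..1, (A * derivative B).eval x :=
    intervalIntegral.integral_add ((intIntegrable _ 0 1)) ((intIntegrable _ 0 1))
  simp only [eval_add, eval_mul] at h h2
  rw [h2] at h
  linarith

lemma parts_iter : ∀ (m : ℕ) (A B : Polynomial ℝ),
    (∀ j, j < m → (derivative^[j] A).eval 0 = 0) →
    (∀ j, j < m → (derivative^[j] A).eval 1 = 0) →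
    ∫ x in (0:ℝ)..1, (derivative^[m] A).eval x * B.eval x
      = (-1)^m * ∫ x in (0:ℝ)..1, A.eval x * (derivative^[m] B).eval x := by
  intro m
  induction m with
  | zero => intro A B _ _; simp
  | succ n ih =>
    intro A B hA0 hA1
    rw [Function.iterate_succ_apply']
    rw [parts_one]
    rw [hA0 n (Nat.lt_succ_self n), hA1 n (Nat.lt_succ_self n)]
    rw [ih A (derivative B) (fun j hj => hA0 j (hj.trans (Nat.lt_succ_self n)))
      (fun j hj => hA1 j (hj.trans (Nat.lt_succ_self n)))]
    rw [← Function.iterate_succ_apply]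
    ring

lemma root_iter_deriv (a : ℝ) : ∀ (m n : ℕ), m < n → ∀ u : Polynomial ℝ,
    (derivative^[m] ((X - C a)^n * u)).eval a = 0 := by
  intro m
  induction m with
  | zero =>
    intro n hn u
    simp only [Function.iterate_zero_apply, eval_mul, eval_pow, eval_sub, eval_X, eval_C,
      sub_self]
    rw [zero_pow (by omega : n ≠ 0)]
    ring
  | succ m ih =>
    intro n hn u
    obtain ⟨n, rfl⟩ : ∃ n', n = n' + 1 := ⟨n - 1, by omega⟩
    rw [Function.iterate_succ_apply]
    have hd : derivative ((X - C a)^(n+1) * u)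
        = (X - C a)^n * (C ((n:ℝ)+1) * u + (X - C a) * derivative u) := by
      rw [derivative_mul, derivative_pow]
      simp only [derivative_sub, derivative_X, derivative_C, sub_zero, mul_one]
      push_cast
      ring
    rw [hd]
    exact ih n (Nat.lt_of_succ_lt_succ hn) _

lemma full_iter_deriv (a : ℝ) : ∀ (n : ℕ) (u : Polynomial ℝ),
    (derivative^[n] ((X - C a)^n * u)).eval a = n.factorial * u.eval a := by
  intro n
  induction n with
  | zero => intro u; simp
  | succ n ih =>
    intro u
    rw [Function.iterate_succ_apply]
    have hd : derivative ((X - C a)^(n+1) * u)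
        = (X - C a)^n * (C ((n:ℝ)+1) * u + (X - C a) * derivative u) := by
      rw [derivative_mul, derivative_pow]
      simp only [derivative_sub, derivative_X, derivative_C, sub_zero, mul_one]
      push_cast
      ring
    rw [hd, ih]
    simp [Nat.factorial_succ]
    push_cast
    ring

lemma leibniz_X : ∀ (n : ℕ) (P : Polynomial ℝ),
    derivative^[n+1] (X * P) = X * derivative^[n+1] P + (n+1 : ℝ[X]) * derivative^[n] P := by
  intro n
  induction n with
  | zero =>
    intro P
    simp [derivative_mul]
    ring
  | succ n ih =>
    intro P
    rw [Function.iterate_succ_apply' derivative (n+1) (X*P), ih P]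
    set A := derivative^[n] P with hA
    have e1 : derivative^[n+1] P = derivative A := Function.iterate_succ_apply' _ _ _
    have e2 : derivative^[n+1+1] P = derivative (derivative A) := by
      rw [Function.iterate_succ_apply', e1]
    rw [e1, e2, derivative_add, derivative_mul, derivative_mul]
    have h3 : (derivative ((n:ℝ[X]) + 1)) = 0 := by simp
    rw [h3, derivative_X]
    push_cast
    ring

lemma base_integral (k : ℕ) :
    ∫ x in (0:ℝ)..1, (X * (1 - X) ^ k : Polynomial ℝ).eval x
      = 1 / (((k:ℝ)+1) * ((k:ℝ)+2)) := by
  have hP : derivative (C (((k:ℝ)+2)⁻¹) * (1 - X)^(k+2) - C (((k:ℝ)+1)⁻¹) * (1 - X)^(k+1))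
      = X * (1 - X)^k := by
    rw [derivative_sub, derivative_mul, derivative_mul, derivative_pow, derivative_pow]
    simp only [derivative_C, derivative_sub, derivative_one, derivative_X, zero_mul, zero_sub,
      zero_add]
    have h1 : (1 - X : Polynomial ℝ)^(k+2-1) = (1-X)^(k+1) := by norm_num
    have h2 : (1 - X : Polynomial ℝ)^(k+1-1) = (1-X)^k := by norm_num
    rw [h1, h2]
    have e1 : C (((k:ℝ)+2)⁻¹) * (C ((k:ℝ)+2) * (1-X)^(k+1) * (-1)) = -(1-X)^(k+1) := by
      rw [← mul_assoc, ← mul_assoc, ← C_mul, inv_mul_cancel₀ (by positivity)]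
      simp
    have e2 : C (((k:ℝ)+1)⁻¹) * (C ((k:ℝ)+1) * (1-X)^k * (-1)) = -(1-X)^k := by
      rw [← mul_assoc, ← mul_assoc, ← C_mul, inv_mul_cancel₀ (by positivity)]
      simp
    push_cast
    rw [e1, e2]
    ring
  rw [← hP, poly_ftc]
  simp only [eval_sub, eval_mul, eval_pow, eval_C, eval_one, eval_sub, eval_X]
  norm_num
  rw [inv_sub_inv (by positivity) (by positivity), ← mul_inv]
  norm_num
  ring_nf

lemma one_sub_X_pow (k : ℕ) :
    ((1 - X : Polynomial ℝ))^k = (X - C 1)^k * C ((-1:ℝ)^k) := by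
  rw [show (1 - X : Polynomial ℝ) = -(X - C 1) by simp, neg_pow]
  rw [mul_comm]
  simp [C_1]

lemma rec_integral (k : ℕ) : ∀ m, m ≤ k - 1 → ∃ Q : Polynomial ℝ,
    X * Q = derivative^[m] (X^(m+2) * (1-X)^k) ∧
    ∫ x in (0:ℝ)..1, Q.eval x = (m.factorial : ℝ) / (((k:ℝ)+1) * ((k:ℝ)+2)) := by
  intro m
  induction m with
  | zero =>
    intro _
    refine ⟨X * (1-X)^k, by rw [Function.iterate_zero_apply]; ring, ?_⟩
    rw [base_integral k]
    simp
  | succ m ih =>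
    intro hm
    obtain ⟨Q, hQ, hQint⟩ := ih (by omega)
    set P : Polynomial ℝ := X^(m+2) * (1-X)^k with hP
    refine ⟨derivative^[m+1] P + C ((m:ℝ)+1) * Q, ?_, ?_⟩
    · have h1 : (X : Polynomial ℝ)^(m+1+2) * (1-X)^k = X * P := by rw [hP]; ring
      rw [h1, leibniz_X m P]
      have h2 : ((m:ℝ[X]) + 1) = C ((m:ℝ)+1) := by simp
      rw [h2, ← hQ]
      ring
    · have hsplit : ∫ x in (0:ℝ)..1, (derivative^[m+1] P + C ((m:ℝ)+1) * Q).eval x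
          = (∫ x in (0:ℝ)..1, (derivative^[m+1] P).eval x)
            + ∫ x in (0:ℝ)..1, (C ((m:ℝ)+1) * Q).eval x := by
        simp only [eval_add]
        exact intervalIntegral.integral_add (intIntegrable _ 0 1) (intIntegrable _ 0 1)
      rw [hsplit]
      have hfirst : ∫ x in (0:ℝ)..1, (derivative^[m+1] P).eval x = 0 := by
        rw [Function.iterate_succ_apply', poly_ftc]
        have e1 : (derivative^[m] P).eval 1 = 0 := by
          have : P = (X - C 1)^k * (C ((-1:ℝ)^k) * X^(m+2)) := by
            rw [hP, one_sub_X_pow k]; ring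
          rw [this]
          exact root_iter_deriv 1 m k (by omega) _
        have e0 : (derivative^[m] P).eval 0 = 0 := by
          rw [← hQ]
          simp
        rw [e1, e0, sub_zero]
      rw [hfirst, zero_add]
      have hsecond : ∫ x in (0:ℝ)..1, (C ((m:ℝ)+1) * Q).eval x
          = ((m:ℝ)+1) * ∫ x in (0:ℝ)..1, Q.eval x := by
        simp only [eval_mul, eval_C]
        exact intervalIntegral.integral_const_mul _ _
      rw [hsecond, hQint, Nat.factorial_succ]
      push_cast
      ring

/-- If k is odd, then ∫₀¹ ψ(x) ψ(1-x) dx = 1/(k(k+1)(k+2)). -/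
theorem stmt_3 (k : ℕ) (hk : Odd k) (ψ : Polynomial ℝ)
    (hdeg : ψ.degree = (k : WithBot ℕ)) (h0 : ψ.eval 0 = 0) (h1 : ψ.eval 1 = 1)
    (horth : ∀ p : Polynomial ℝ, p.degree ≤ (k : WithBot ℕ) → p.eval 0 = 0 → p.eval 1 = 0 →
      ∫ x in (0:ℝ)..1, ψ.eval x * p.eval x = 0) :
    ∫ x in (0:ℝ)..1, ψ.eval x * ψ.eval (1 - x) = 1 / ((k : ℝ) * (k + 1) * (k + 2)) := by
  have hk1 : 1 ≤ k := hk.pos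
  have hfac : (k.factorial : ℝ) ≠ 0 := Nat.cast_ne_zero.mpr k.factorial_ne_zero
  set F : Polynomial ℝ := X^(k+1) * (1-X)^k with hF
  -- the quotient polynomial Q
  obtain ⟨Q, hQ, hQint⟩ := rec_integral k (k-1) le_rfl
  rw [show k-1+2 = k+1 by omega] at hQ
  -- F as (X - 1)^k * u
  have hF1 : F = (X - C 1)^k * (C ((-1:ℝ)^k) * X^(k+1)) := by
    rw [hF, one_sub_X_pow k]; ring
  -- F as X^{k+1} * u
  have hF0 : F = (X - C 0)^(k+1) * (1-X)^k := by rw [hF]; simp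
  -- roots of iterated derivatives of F
  have hFd0 : ∀ j, j < k → (derivative^[j] F).eval 0 = 0 := by
    intro j hj
    rw [hF0]; exact root_iter_deriv 0 j (k+1) (by omega) _
  have hFd1 : ∀ j, j < k → (derivative^[j] F).eval 1 = 0 := by
    intro j hj
    rw [hF1]; exact root_iter_deriv 1 j k hj _
  -- Q has root at 1
  have hQ1 : Q.eval 1 = 0 := by
    have := hFd1 (k-1) (by omega)
    rw [← hQ] at this
    simpa using this
  obtain ⟨q1, hq1⟩ : (X - C 1) ∣ Q := dvd_iff_isRoot.mpr hQ1
  -- definition of Ψ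
  set Ψ : Polynomial ℝ := C (-(k.factorial:ℝ)⁻¹) * q1 with hΨ
  -- key identity
  have hkey : C (k.factorial:ℝ) * (X * (1 - X) * Ψ) = derivative^[k-1] F := by
    rw [← hQ, hq1, hΨ]
    rw [show C (k.factorial:ℝ) * (X * (1-X) * (C (-(k.factorial:ℝ)⁻¹) * q1))
        = (C (k.factorial:ℝ) * C (-(k.factorial:ℝ)⁻¹)) * (X * (1-X) * q1) by ring]
    rw [← C_mul, mul_neg, mul_inv_cancel₀ hfac]
    rw [show C (-1:ℝ) = -1 by simp]
    simp only [C_1]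
    ring
  have hQΨ : Q = C (k.factorial:ℝ) * ((1 - X) * Ψ) := by
    have hX : (X : Polynomial ℝ) ≠ 0 := X_ne_zero
    apply mul_left_cancel₀ hX
    rw [hQ, ← hkey]; ring
  -- derivative^[k] F
  have hDkF : derivative^[k] F = C (k.factorial:ℝ) * derivative (X * (1 - X) * Ψ) := by
    have hstep : derivative^[k] F = derivative (derivative^[k-1] F) := by
      conv_lhs => rw [show k = (k-1)+1 by omega, Function.iterate_succ_apply']
    rw [hstep, ← hkey, derivative_C_mul]
  -- eval of Ψ at 0 and 1
  have hΨ0 : Ψ.eval 0 = 0 := by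
    have hzero : (derivative^[k] F).eval 0 = 0 := by
      rw [hF0]; exact root_iter_deriv 0 k (k+1) (by omega) _
    rw [hDkF] at hzero
    simp only [eval_mul, eval_C, derivative_mul, eval_add, derivative_sub, derivative_one,
      derivative_X, eval_sub, eval_one, eval_X, zero_sub, eval_neg] at hzero
    rcases mul_eq_zero.mp hzero with h | h
    · exact absurd h hfac
    · simpa using h
  have hΨ1 : Ψ.eval 1 = 1 := by
    have hval : (derivative^[k] F).eval 1 = -(k.factorial:ℝ) := by
      rw [hF1, full_iter_deriv]
      simp [hk.neg_one_pow]
    rw [hDkF] at hval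
    simp only [eval_mul, eval_C, derivative_mul, eval_add, derivative_sub, derivative_one,
      derivative_X, eval_sub, eval_one, eval_X, zero_sub, eval_neg] at hval
    field_simp at hval
    linarith
  have hΨne : Ψ ≠ 0 := fun h => by simp [h] at hΨ1
  -- degree bound for Ψ
  have hdegΨ : Ψ.degree ≤ (k : WithBot ℕ) := by
    have hFdeg : F.natDegree ≤ 2*k+1 := by
      refine le_trans (natDegree_mul_le) ?_
      have h1 : (X^(k+1) : Polynomial ℝ).natDegree ≤ k+1 := by simp
      have h2 : ((1-X)^k : Polynomial ℝ).natDegree ≤ k := by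
        refine le_trans (natDegree_pow_le) ?_
        have : (1 - X : Polynomial ℝ).natDegree ≤ 1 := by
          refine le_trans (natDegree_sub_le _ _) ?_
          simp
        nlinarith [this]
      omega
    have hDdeg : (derivative^[k-1] F).natDegree ≤ k+2 := by
      refine le_trans (natDegree_iterate_derivative _ _) (by omega)
    rw [← hkey] at hDdeg
    have hXne : (X * (1 - X) : Polynomial ℝ) ≠ 0 := by
      intro h
      have := congrArg (fun p => Polynomial.eval (1/2 : ℝ) p) h
      norm_num at this
    have e1 : (C (k.factorial:ℝ) * (X * (1 - X) * Ψ)).natDegree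
        = (X * (1 - X) : Polynomial ℝ).natDegree + Ψ.natDegree := by
      rw [natDegree_C_mul hfac, natDegree_mul hXne hΨne]
    have e2 : (X * (1 - X) : Polynomial ℝ).natDegree = 2 := by
      rw [show (X * (1-X) : Polynomial ℝ) = -((X - C 0) * (X - C 1)) by
        simp only [C_0, C_1, sub_zero]; ring]
      rw [natDegree_neg, natDegree_mul (X_sub_C_ne_zero 0) (X_sub_C_ne_zero 1),
        natDegree_X_sub_C, natDegree_X_sub_C]
    rw [e1, e2] at hDdeg
    have : Ψ.natDegree ≤ k := by omega
    exact le_trans (degree_le_natDegree) (by exact_mod_cast this)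
  -- orthogonality of Ψ
  have horthΨ : ∀ p : Polynomial ℝ, p.degree ≤ (k : WithBot ℕ) → p.eval 0 = 0 → p.eval 1 = 0 →
      ∫ x in (0:ℝ)..1, Ψ.eval x * p.eval x = 0 := by
    intro p hpd hp0 hp1
    have hdvd0 : (X - C 0) ∣ p := dvd_iff_isRoot.mpr (by simpa using hp0)
    have hdvd1 : (X - C 1) ∣ p := dvd_iff_isRoot.mpr hp1
    have hcop : IsCoprime (X - C (0:ℝ)) (X - C 1) :=
      isCoprime_X_sub_C_of_isUnit_sub (by norm_num)
    obtain ⟨q, hq⟩ := hcop.mul_dvd hdvd0 hdvd1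
    rcases eq_or_ne q 0 with rfl | hqne
    · have : p = 0 := by rw [hq]; ring
      simp [this]
    have hqdeg : q.natDegree + 2 ≤ k := by
      have hpne : p ≠ 0 := by
        rw [hq]
        exact mul_ne_zero (mul_ne_zero (X_sub_C_ne_zero 0) (X_sub_C_ne_zero 1)) hqne
      have : p.natDegree ≤ k := natDegree_le_iff_degree_le.mpr hpd
      have e : p.natDegree = 2 + q.natDegree := by
        rw [hq, natDegree_mul (mul_ne_zero (X_sub_C_ne_zero (0:ℝ)) (X_sub_C_ne_zero 1)) hqne,
          natDegree_mul (X_sub_C_ne_zero (0:ℝ)) (X_sub_C_ne_zero 1),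
          natDegree_X_sub_C, natDegree_X_sub_C]
      omega
    -- rewrite integrand
    have hfun : ∀ x : ℝ, Ψ.eval x * p.eval x
        = (-(k.factorial:ℝ)⁻¹) * ((derivative^[k-1] F).eval x * q.eval x) := by
      intro x
      have hkx : (derivative^[k-1] F).eval x = (k.factorial:ℝ) * (x*(1-x)*Ψ.eval x) := by
        rw [← hkey]
        simp only [eval_mul, eval_C, eval_sub, eval_one, eval_X]
      rw [hq, hkx]
      simp only [eval_mul, eval_sub, eval_X, eval_C]
      field_simp
      ring
    have : (∫ x in (0:ℝ)..1, Ψ.eval x * p.eval x)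
        = ∫ x in (0:ℝ)..1, (-(k.factorial:ℝ)⁻¹) * ((derivative^[k-1] F).eval x * q.eval x) := by
      apply intervalIntegral.integral_congr
      intro x _
      exact hfun x
    rw [this, intervalIntegral.integral_const_mul]
    have hparts := parts_iter (k-1) F q (fun j hj => hFd0 j (by omega))
      (fun j hj => hFd1 j (by omega))
    have hq0 : derivative^[k-1] q = 0 :=
      iterate_derivative_eq_zero (by omega)
    rw [hq0] at hparts
    simp only [eval_zero, mul_zero] at hparts
    rw [hparts]
    simp
  -- ψ = Ψ
  have hψΨ : ψ = Ψ := by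
    by_contra hne
    set d : Polynomial ℝ := ψ - Ψ with hd
    have hdne : d ≠ 0 := sub_ne_zero_of_ne hne
    have hdd : d.degree ≤ (k : WithBot ℕ) := le_trans (degree_sub_le _ _)
      (max_le (le_of_eq hdeg) hdegΨ)
    have hd0 : d.eval 0 = 0 := by simp [hd, h0, hΨ0]
    have hd1 : d.eval 1 = 0 := by simp [hd, h1, hΨ1]
    have hI1 := horth d hdd hd0 hd1
    have hI2 := horthΨ d hdd hd0 hd1
    have hIzero : (∫ x in (0:ℝ)..1, (d*d).eval x) = 0 := by
      have : (∫ x in (0:ℝ)..1, (d*d).eval x)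
          = (∫ x in (0:ℝ)..1, ψ.eval x * d.eval x) - ∫ x in (0:ℝ)..1, Ψ.eval x * d.eval x := by
        rw [← intervalIntegral.integral_sub (f := fun x => ψ.eval x * d.eval x)
          (g := fun x => Ψ.eval x * d.eval x)
          ((ψ.continuous.mul d.continuous).intervalIntegrable 0 1)
          ((Ψ.continuous.mul d.continuous).intervalIntegrable 0 1)]
        apply intervalIntegral.integral_congr
        intro x _
        simp [hd]
        ring
      rw [this, hI1, hI2, sub_zero]
    have hpos : 0 < ∫ x in (0:ℝ)..1, (d*d).eval x := by
      rw [intervalIntegral.integral_of_le (by norm_num : (0:ℝ) ≤ 1)]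
      rw [MeasureTheory.integral_pos_iff_support_of_nonneg_ae]
      · rw [MeasureTheory.Measure.restrict_apply' measurableSet_Ioc]
        have hsub : Set.Ioc (0:ℝ) 1 \ {x | d.IsRoot x}
            ⊆ (Function.support fun x => (d*d).eval x) ∩ Set.Ioc 0 1 := by
          rintro x ⟨hx1, hx2⟩
          refine ⟨?_, hx1⟩
          simp only [Function.mem_support, eval_mul]
          intro h
          exact hx2 (by simpa using mul_self_eq_zero.mp h)
        refine lt_of_lt_of_le ?_ (MeasureTheory.measure_mono hsub)
        rw [MeasureTheory.measure_diff_null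
          ((Polynomial.finite_setOf_isRoot hdne).measure_zero _)]
        simp [Real.volume_Ioc]
      · filter_upwards with x
        simp only [eval_mul, Pi.zero_apply]
        exact mul_self_nonneg _
      · exact (intIntegrable (d*d) 0 1).1
    rw [hIzero] at hpos
    exact lt_irrefl 0 hpos
  -- final computation
  have hcompdeg : (ψ.comp (1 - X)).degree ≤ (k : WithBot ℕ) := by
    have hnd : (ψ.comp (1 - X)).natDegree ≤ k := by
      refine le_trans natDegree_comp_le ?_
      have h1 : (1 - X : Polynomial ℝ).natDegree ≤ 1 :=
        le_trans (natDegree_sub_le _ _) (by simp)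
      have h2 : ψ.natDegree = k := natDegree_eq_of_degree_eq_some hdeg
      nlinarith
    exact le_trans degree_le_natDegree (by exact_mod_cast hnd)
  set pc : Polynomial ℝ := ψ.comp (1 - X) - (1 - X) with hpc
  have hpcd : pc.degree ≤ (k : WithBot ℕ) := by
    refine le_trans (degree_sub_le _ _) (max_le hcompdeg ?_)
    refine le_trans (degree_sub_le _ _) ?_
    simp only [degree_one, degree_X]
    rw [max_le_iff]
    constructor
    · exact le_trans (by norm_num) (by exact_mod_cast Nat.one_le_cast.mpr hk1 : (1:WithBot ℕ) ≤ k)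
    · exact (by exact_mod_cast Nat.one_le_cast.mpr hk1 : (1:WithBot ℕ) ≤ k)
  have hpc0 : pc.eval 0 = 0 := by simp [hpc, eval_comp, h1]
  have hpc1 : pc.eval 1 = 0 := by simp [hpc, eval_comp, h0]
  have hmain := horth pc hpcd hpc0 hpc1
  have hsplit : (∫ x in (0:ℝ)..1, ψ.eval x * pc.eval x)
      = (∫ x in (0:ℝ)..1, ψ.eval x * ψ.eval (1-x))
        - ∫ x in (0:ℝ)..1, ψ.eval x * (1-x) := by
    rw [← intervalIntegral.integral_sub]
    · apply intervalIntegral.integral_congr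
      intro x _
      simp [hpc, eval_comp]
      ring
    · have hc : Continuous fun x : ℝ => ψ.eval x * ψ.eval (1 - x) :=
        ψ.continuous.mul (ψ.continuous.comp (continuous_const.sub continuous_id))
      exact hc.intervalIntegrable 0 1
    · have hc : Continuous fun x : ℝ => ψ.eval x * (1 - x) :=
        ψ.continuous.mul (continuous_const.sub continuous_id)
      exact hc.intervalIntegrable 0 1
  rw [hsplit] at hmain
  have hlast : (∫ x in (0:ℝ)..1, ψ.eval x * (1-x))
      = (k.factorial:ℝ)⁻¹ * ∫ x in (0:ℝ)..1, Q.eval x := by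
    rw [← intervalIntegral.integral_const_mul]
    apply intervalIntegral.integral_congr
    intro x _
    rw [hψΨ, hQΨ]
    simp only [eval_mul, eval_C, eval_sub, eval_one, eval_X]
    field_simp
  rw [hlast, hQint] at hmain
  have harith : (k.factorial:ℝ)⁻¹ * ((((k-1:ℕ)).factorial : ℝ) / (((k:ℝ)+1) * ((k:ℝ)+2)))
      = 1 / ((k : ℝ) * (k + 1) * (k + 2)) := by
    have hfacid : (k:ℝ) * ((k-1:ℕ)).factorial = (k.factorial : ℝ) := by
      exact_mod_cast congrArg (Nat.cast : ℕ → ℝ) (Nat.mul_factorial_pred (by omega))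
    have hkpos : (0:ℝ) < k := by exact_mod_cast hk1
    have hfne : (((k-1:ℕ)).factorial : ℝ) ≠ 0 := by positivity
    rw [← hfacid, mul_inv]
    field_simp
  rw [harith] at hmain
  linarith
end

section
/- If k is odd, then ∫₀¹ ψ(x) dx = 1/(k(k+1)). -/
open Polynomial intervalIntegral

/-- If k is odd, then ∫₀¹ ψ(x) dx = 1/(k(k+1)), given the known
identities ∫₀¹ ψ² = 1/(k(k+2)) and ∫₀¹ ψ(x)ψ(1-x) dx = 1/(k(k+1)(k+2)). -/
theorem stmt_5 (k : ℕ) (hk : Odd k) (ψ : Polynomial ℝ)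
    (hdeg : ψ.degree = (k : WithBot ℕ)) (h0 : ψ.eval 0 = 0) (h1 : ψ.eval 1 = 1)
    (horth : ∀ p : Polynomial ℝ, p.degree ≤ (k : WithBot ℕ) → p.eval 0 = 0 → p.eval 1 = 0 →
      ∫ x in (0:ℝ)..1, ψ.eval x * p.eval x = 0)
    (hsq : ∫ x in (0:ℝ)..1, (ψ.eval x) ^ 2 = 1 / ((k : ℝ) * (k + 2)))
    (hrefl : ∫ x in (0:ℝ)..1, ψ.eval x * ψ.eval (1 - x) = 1 / ((k : ℝ) * (k + 1) * (k + 2))) :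
    ∫ x in (0:ℝ)..1, ψ.eval x = 1 / ((k : ℝ) * (k + 1)) := by
  have hkpos : 0 < k := hk.pos
  have hknd : ψ.natDegree = k := natDegree_eq_of_degree_eq_some hdeg
  set p : Polynomial ℝ := ψ + ψ.comp (C 1 - X) - C 1 with hp
  have hcomp_eval : ∀ x : ℝ, (ψ.comp (C 1 - X)).eval x = ψ.eval (1 - x) := by
    intro x; simp [eval_comp]
  have hpe : ∀ x : ℝ, p.eval x = ψ.eval x + ψ.eval (1 - x) - 1 := by
    intro x; simp [hp, hcomp_eval x]
  have hdcomp : (ψ.comp (C 1 - X)).degree ≤ (k : WithBot ℕ) := by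
    refine le_trans (degree_le_natDegree) ?_
    have : (ψ.comp (C 1 - X)).natDegree ≤ k := by
      refine le_trans (natDegree_comp_le) ?_
      have h1' : (C (1:ℝ) - X).natDegree ≤ 1 := by
        refine le_trans (natDegree_sub_le _ _) ?_
        simp
      calc ψ.natDegree * (C (1:ℝ) - X).natDegree ≤ ψ.natDegree * 1 :=
            Nat.mul_le_mul_left _ h1'
        _ = k := by simp [hknd]
    exact_mod_cast Nat.cast_le.mpr this
  have hpdeg : p.degree ≤ (k : WithBot ℕ) := by
    refine le_trans (degree_sub_le _ _) ?_
    refine max_le (le_trans (degree_add_le _ _) (max_le hdeg.le hdcomp)) ?_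
    refine le_trans degree_C_le ?_
    exact_mod_cast WithBot.coe_le_coe.mpr (Nat.zero_le k)
  have hp0 : p.eval 0 = 0 := by rw [hpe]; simp [h0, h1]
  have hp1 : p.eval 1 = 0 := by rw [hpe]; simp [h0, h1]
  have key := horth p hpdeg hp0 hp1
  have hi1 : IntervalIntegrable (fun x => (ψ.eval x) ^ 2) MeasureTheory.volume 0 1 :=
    (Continuous.pow (ψ.continuous_aeval) 2).intervalIntegrable 0 1
  have hi2 : IntervalIntegrable (fun x => ψ.eval x * ψ.eval (1 - x)) MeasureTheory.volume 0 1 :=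
    (ψ.continuous_aeval.mul (ψ.continuous_aeval.comp (continuous_const.sub continuous_id))).intervalIntegrable 0 1
  have hi3 : IntervalIntegrable (fun x => ψ.eval x) MeasureTheory.volume 0 1 :=
    ψ.continuous_aeval.intervalIntegrable 0 1
  have expand : (∫ x in (0:ℝ)..1, ψ.eval x * p.eval x)
      = (∫ x in (0:ℝ)..1, (ψ.eval x) ^ 2) + (∫ x in (0:ℝ)..1, ψ.eval x * ψ.eval (1 - x))
        - (∫ x in (0:ℝ)..1, ψ.eval x) := by
    rw [← intervalIntegral.integral_add hi1 hi2, ← intervalIntegral.integral_sub (hi1.add hi2) hi3]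
    refine intervalIntegral.integral_congr fun x _ => ?_
    rw [hpe x]; ring
  rw [expand, hsq, hrefl] at key
  have hk0 : (k : ℝ) ≠ 0 := Nat.cast_ne_zero.mpr hkpos.ne'
  have hk1 : (k : ℝ) + 1 ≠ 0 := by positivity
  have hk2 : (k : ℝ) + 2 ≠ 0 := by positivity
  have : ∫ x in (0:ℝ)..1, ψ.eval x = 1 / ((k : ℝ) * (k + 2)) + 1 / ((k : ℝ) * (k + 1) * (k + 2)) := by
    linarith
  rw [this]; field_simp; ring
end

section
/- If k is odd, then ∫₀¹ ψ'(x) ψ(1-x) dx = 1/(k+1). -/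
open Polynomial intervalIntegral

/-- If k is odd, then ∫₀¹ ψ'(x) ψ(1-x) dx = 1/(k+1). -/
theorem stmt_8 (k : ℕ) (hk : Odd k) (ψ : Polynomial ℝ)
    (hdeg : ψ.degree = (k : WithBot ℕ)) (h0 : ψ.eval 0 = 0) (h1 : ψ.eval 1 = 1)
    (horth : ∀ p : Polynomial ℝ, p.degree ≤ (k : WithBot ℕ) → p.eval 0 = 0 → p.eval 1 = 0 →
      ∫ x in (0:ℝ)..1, ψ.eval x * p.eval x = 0)
    (hd0 : (Polynomial.derivative ψ).eval 0 = ((k : ℝ) + 1) / 2)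
    (hd1 : (Polynomial.derivative ψ).eval 1 = ((k : ℝ) ^ 2 + 2 * k - 1) / 2)
    (hi1 : ∫ x in (0:ℝ)..1, x * ψ.eval (1 - x) = 1 / ((k : ℝ) * (k + 1) * (k + 2)))
    (hi2 : ∫ x in (0:ℝ)..1, (1 - x) * ψ.eval (1 - x) = 1 / ((k : ℝ) * (k + 2))) :
    ∫ x in (0:ℝ)..1, (Polynomial.derivative ψ).eval x * ψ.eval (1 - x) = 1 / ((k : ℝ) + 1) := by
  have hk1 : 1 ≤ k := hk.pos
  have hkR : (1:ℝ) ≤ (k:ℝ) := by exact_mod_cast hk1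
  have hψc : Continuous fun x : ℝ => ψ.eval x := ψ.continuous
  have hψ'c : Continuous fun x : ℝ => (derivative ψ).eval x := (derivative ψ).continuous
  have hsubc : Continuous fun x : ℝ => (1:ℝ) - x := continuous_const.sub continuous_id
  have c1 : Continuous fun x : ℝ => (derivative ψ).eval x * ψ.eval (1 - x) :=
    hψ'c.mul (hψc.comp hsubc)
  have c2 : Continuous fun x : ℝ => ψ.eval x * (derivative ψ).eval (1 - x) :=
    hψc.mul (hψ'c.comp hsubc)
  -- Step 1: integration by parts
  have key : (∫ x in (0:ℝ)..1,
      ((derivative ψ).eval x * ψ.eval (1 - x) - ψ.eval x * (derivative ψ).eval (1 - x))) = 0 := by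
    have hder : ∀ x ∈ Set.uIcc (0:ℝ) 1, HasDerivAt (fun x => ψ.eval x * ψ.eval (1 - x))
        ((derivative ψ).eval x * ψ.eval (1 - x) - ψ.eval x * (derivative ψ).eval (1 - x)) x := by
      intro x _
      have hA : HasDerivAt (fun x : ℝ => ψ.eval (1 - x)) (-(derivative ψ).eval (1 - x)) x := by
        have := (ψ.hasDerivAt (1 - x)).comp x ((hasDerivAt_id x).const_sub 1)
        simpa [Function.comp_def] using this
      have h2 : HasDerivAt (fun y => ψ.eval y * ψ.eval (1 - y)) _ x := (ψ.hasDerivAt x).mul hA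
      convert h2 using 1
      ring
    rw [intervalIntegral.integral_eq_sub_of_hasDerivAt hder ((c1.sub c2).intervalIntegrable 0 1)]
    simp [h0, h1]
  have hIJ : (∫ x in (0:ℝ)..1, (derivative ψ).eval x * ψ.eval (1 - x)) =
      ∫ x in (0:ℝ)..1, ψ.eval x * (derivative ψ).eval (1 - x) := by
    rw [intervalIntegral.integral_sub (c1.intervalIntegrable 0 1) (c2.intervalIntegrable 0 1)]
      at key
    linarith
  -- Step 2: orthogonality decomposition
  set a : ℝ := ((k:ℝ)^2 + 2*k - 1)/2 with ha
  set b : ℝ := ((k:ℝ)+1)/2 with hb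
  set p : Polynomial ℝ := (derivative ψ).comp (C 1 - X) - (C (b - a) * X + C a) with hp
  have hnψ : ψ.natDegree = k := natDegree_eq_of_degree_eq_some hdeg
  have hdegp : p.degree ≤ (k : WithBot ℕ) := by
    refine le_trans (degree_sub_le _ _) (max_le ?_ ?_)
    · refine le_trans degree_le_natDegree ?_
      rw [natDegree_comp]
      have hx : (C (1:ℝ) - X).natDegree = 1 := by
        have hxx : (C (1:ℝ) - X) = -(X - C 1) := by ring
        rw [hxx, natDegree_neg, natDegree_X_sub_C]
      rw [hx, mul_one]
      have h' : (derivative ψ).natDegree ≤ k - 1 := hnψ ▸ natDegree_derivative_le ψ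
      exact_mod_cast h'.trans (Nat.sub_le k 1)
    · refine le_trans degree_linear_le ?_
      exact_mod_cast hk1
  have hp0 : p.eval 0 = 0 := by
    simp [hp, eval_comp, hd1, ha]
  have hp1 : p.eval 1 = 0 := by
    simp [hp, eval_comp, hd0]
  have horthp := horth p hdegp hp0 hp1
  -- decomposition of the integrand
  have hdecomp : ∀ x : ℝ, ψ.eval x * (derivative ψ).eval (1 - x)
      = ψ.eval x * p.eval x + (a * ((1 - x) * ψ.eval x) + b * (x * ψ.eval x)) := by
    intro x
    simp [hp, eval_comp]
    ring
  have cp : Continuous fun x : ℝ => ψ.eval x * p.eval x := hψc.mul p.continuous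
  have clin : Continuous fun x : ℝ =>
      a * ((1 - x) * ψ.eval x) + b * (x * ψ.eval x) :=
    (continuous_const.mul ((continuous_const.sub continuous_id).mul hψc)).add
      (continuous_const.mul (continuous_id.mul hψc))
  have hJ : (∫ x in (0:ℝ)..1, ψ.eval x * (derivative ψ).eval (1 - x))
      = (∫ x in (0:ℝ)..1, ψ.eval x * p.eval x)
        + ∫ x in (0:ℝ)..1, (a * ((1 - x) * ψ.eval x) + b * (x * ψ.eval x)) := by
    rw [← intervalIntegral.integral_add (cp.intervalIntegrable 0 1)
      (clin.intervalIntegrable 0 1)]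
    simp only [hdecomp]
  -- substitution x ↦ 1 - x in hypotheses
  have hm1 : (∫ x in (0:ℝ)..1, (1 - x) * ψ.eval x) = 1 / ((k:ℝ) * (k + 1) * (k + 2)) := by
    rw [← hi1]
    have := intervalIntegral.integral_comp_sub_left (a := (0:ℝ)) (b := 1)
      (fun u => (1 - u) * ψ.eval u) 1
    simp only [sub_sub_cancel, sub_zero, sub_self] at this
    exact this.symm
  have hm2 : (∫ x in (0:ℝ)..1, x * ψ.eval x) = 1 / ((k:ℝ) * (k + 2)) := by
    rw [← hi2]
    have := intervalIntegral.integral_comp_sub_left (a := (0:ℝ)) (b := 1)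
      (fun u => u * ψ.eval u) 1
    simp only [sub_zero, sub_self] at this
    exact this.symm
  have hlin : (∫ x in (0:ℝ)..1, (a * ((1 - x) * ψ.eval x) + b * (x * ψ.eval x)))
      = a * (1 / ((k:ℝ) * (k + 1) * (k + 2))) + b * (1 / ((k:ℝ) * (k + 2))) := by
    rw [intervalIntegral.integral_add (f := fun x => a * ((1 - x) * ψ.eval x))
      (g := fun x => b * (x * ψ.eval x))
      (((continuous_const.mul ((continuous_const.sub continuous_id').mul hψc)).intervalIntegrable 0 1))
      ((continuous_const.mul (continuous_id'.mul hψc)).intervalIntegrable 0 1),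
      intervalIntegral.integral_const_mul, intervalIntegral.integral_const_mul, hm1, hm2]
  rw [hIJ, hJ, horthp, hlin, zero_add, ha, hb]
  have hk0 : (k:ℝ) ≠ 0 := by linarith
  have hk1' : (k:ℝ) + 1 ≠ 0 := by linarith
  have hk2' : (k:ℝ) + 2 ≠ 0 := by linarith
  field_simp
  ring
end

section
/- Let w: [a,b] → ℝ be continuous. A continuous function v on [a,b] satisfies ∫_a^b w(x)v(x)p(x) dx = 0 for all polynomials p of degree ≤ m if and only if there exists f ∈ C^{m+1}(a,b) with w·v = f^{(m+1)} on [a,b] and f^{(j)}(a) = f^{(j)}(b) = 0 for j = 0, 1, …, m. -/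
open Polynomial intervalIntegral

private lemma hasDerivAt_primitive' {g : ℝ → ℝ} (hg : Continuous g) (a x : ℝ) :
    HasDerivAt (fun u => ∫ t in a..u, g t) (g x) x :=
  intervalIntegral.integral_hasDerivAt_right (hg.intervalIntegrable a x)
    (hg.stronglyMeasurableAtFilter _ _) hg.continuousAt

/-- Iterated primitives starting at `a`. -/
private noncomputable def primIter (g : ℝ → ℝ) (a : ℝ) : ℕ → ℝ → ℝ
  | 0 => g
  | (k + 1) => fun x => ∫ t in a..x, primIter g a k t

private lemma primIter_cont {g : ℝ → ℝ} (hg : Continuous g) (a : ℝ) :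
    ∀ k, Continuous (primIter g a k) := by
  intro k
  induction k with
  | zero => exact hg
  | succ k ih =>
    have : ∀ x, HasDerivAt (primIter g a (k + 1)) (primIter g a k x) x := fun x =>
      hasDerivAt_primitive' ih a x
    exact Differentiable.continuous (fun x => (this x).differentiableAt)

private lemma primIter_hasDerivAt {g : ℝ → ℝ} (hg : Continuous g) (a : ℝ) (k : ℕ) (x : ℝ) :
    HasDerivAt (primIter g a (k + 1)) (primIter g a k x) x :=
  hasDerivAt_primitive' (primIter_cont hg a k) a x

private lemma primIter_deriv {g : ℝ → ℝ} (hg : Continuous g) (a : ℝ) (k : ℕ) :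
    deriv (primIter g a (k + 1)) = primIter g a k :=
  funext fun x => (primIter_hasDerivAt hg a k x).deriv

private lemma primIter_contDiff {g : ℝ → ℝ} (hg : Continuous g) (a : ℝ) (k : ℕ) :
    ContDiff ℝ (k : ℕ) (primIter g a k) := by
  induction k with
  | zero => exact contDiff_zero.mpr hg
  | succ k ih =>
    have : ((k + 1 : ℕ) : WithTop ℕ∞) = (k : WithTop ℕ∞) + 1 := by push_cast; ring
    rw [this, contDiff_succ_iff_deriv]
    refine ⟨fun x => (primIter_hasDerivAt hg a k x).differentiableAt, by simp, ?_⟩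
    rw [primIter_deriv hg a k]
    exact ih

private lemma primIter_iteratedDeriv {g : ℝ → ℝ} (hg : Continuous g) (a : ℝ) (j n : ℕ) :
    iteratedDeriv j (primIter g a (n + j)) = primIter g a n := by
  induction j generalizing n with
  | zero => simp
  | succ j ih =>
    rw [show n + (j + 1) = (n + j) + 1 from rfl, iteratedDeriv_succ',
      primIter_deriv hg a (n + j)]
    exact ih n

/-- Powell, Th. 12.5: Let w be continuous on [a,b]. A continuous
function v on [a,b] satisfies ∫_a^b w v p = 0 for all polynomials p of degree ≤ m
iff there exists f ∈ C^{m+1} with w·v = f^{(m+1)} on [a,b] and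
f^{(j)}(a) = f^{(j)}(b) = 0 for j = 0,…,m. -/
theorem stmt_11 (a b : ℝ) (hab : a < b) (m : ℕ) (w v : ℝ → ℝ)
    (hw : ContinuousOn w (Set.Icc a b)) (hv : ContinuousOn v (Set.Icc a b)) :
    (∀ p : Polynomial ℝ, p.degree ≤ (m : WithBot ℕ) →
        ∫ x in a..b, w x * v x * p.eval x = 0) ↔
    (∃ f : ℝ → ℝ, ContDiff ℝ (m + 1 : ℕ) f ∧
        (∀ x ∈ Set.Icc a b, iteratedDeriv (m + 1) f x = w x * v x) ∧
        (∀ j : ℕ, j ≤ m → iteratedDeriv j f a = 0 ∧ iteratedDeriv j f b = 0)) := by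
  have hcl : ∀ x : ℝ, min (max x a) b ∈ Set.Icc a b := fun x =>
    ⟨le_min (le_max_right x a) hab.le, min_le_right _ _⟩
  set c : ℝ → ℝ := fun x => min (max x a) b with hc
  have hcc : Continuous c := (continuous_id.max continuous_const).min continuous_const
  set g : ℝ → ℝ := fun x => w (c x) * v (c x) with hgdef
  have hg : Continuous g := (hw.comp_continuous hcc hcl).mul (hv.comp_continuous hcc hcl)
  have hgeq : ∀ x ∈ Set.Icc a b, g x = w x * v x := by
    intro x hx
    have hcx : c x = x := by
      simp only [hc]; rw [max_eq_left hx.1, min_eq_left hx.2]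
    simp [hgdef, hcx]
  constructor
  · intro h
    set G := primIter g a with hG
    have hGc : ∀ k, Continuous (G k) := primIter_cont hg a
    have hGa : ∀ k, G (k + 1) a = 0 := fun k => intervalIntegral.integral_same
    have hQ : ∀ k, k ≤ m → ∀ n, n ≤ m - k → ∫ x in a..b, G k x * x ^ n = 0 := by
      intro k
      induction k with
      | zero =>
        intro _ n hn
        have h1 := h (X ^ n : Polynomial ℝ) (by
          rw [Polynomial.degree_X_pow]
          exact_mod_cast (show n ≤ m by omega))
        have h2 : ∫ x in a..b, g x * x ^ n = ∫ x in a..b, w x * v x * x ^ n := by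
          apply intervalIntegral.integral_congr
          intro x hx
          rw [Set.uIcc_of_le hab.le] at hx
          show g x * x ^ n = w x * v x * x ^ n
          rw [hgeq x hx]
        simp only [eval_pow, eval_X] at h1
        rw [show G 0 = g from rfl, h2]
        exact h1
      | succ k ih =>
        intro hk1 n hn
        have hk : k ≤ m := (Nat.le_succ k).trans hk1
        have ih' := ih hk
        have hGb : G (k + 1) b = 0 := by
          have h0 := ih' 0 (Nat.zero_le _)
          simp only [pow_zero, mul_one] at h0
          simpa [hG, primIter] using h0
        have hn' : n + 1 ≤ m - k := by omega
        have parts := intervalIntegral.integral_mul_deriv_eq_deriv_mul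
          (u := G (k + 1)) (v := fun x => x ^ (n + 1))
          (u' := G k) (v' := fun x => ((n : ℝ) + 1) * x ^ n)
          (fun x _ => primIter_hasDerivAt hg a k x)
          (fun x _ => by simpa using hasDerivAt_pow (n + 1) x)
          ((hGc k).intervalIntegrable a b)
          ((continuous_const.mul (continuous_pow n)).intervalIntegrable a b)
        rw [hGa k, hGb, ih' (n + 1) hn'] at parts
        have h3 : ∫ x in a..b, G (k + 1) x * (((n : ℝ) + 1) * x ^ n) =
            ((n : ℝ) + 1) * ∫ x in a..b, G (k + 1) x * x ^ n := by
          rw [← intervalIntegral.integral_const_mul]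
          congr 1; funext x; ring
        rw [h3] at parts
        simp only [zero_mul, sub_zero, zero_sub, neg_zero] at parts
        have hne : ((n : ℝ) + 1) ≠ 0 := by positivity
        exact (mul_eq_zero.mp parts).resolve_left hne
    have hGb : ∀ k, k ≤ m → G (k + 1) b = 0 := by
      intro k hk
      have h0 := hQ k hk 0 (Nat.zero_le _)
      simp only [pow_zero, mul_one] at h0
      simpa [hG, primIter] using h0
    refine ⟨G (m + 1), primIter_contDiff hg a (m + 1), ?_, ?_⟩
    · intro x hx
      have hkey := primIter_iteratedDeriv hg a (m + 1) 0
      rw [zero_add] at hkey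
      rw [hG, hkey]
      exact hgeq x hx
    · intro j hj
      have hkey := primIter_iteratedDeriv hg a j (m + 1 - j)
      rw [show m + 1 - j + j = m + 1 by omega] at hkey
      rw [hG, hkey, show m + 1 - j = (m - j) + 1 by omega]
      exact ⟨hGa (m - j), hGb (m - j) (by omega)⟩
  · rintro ⟨f, hf, hf1, hf2⟩ p hp
    have hdiff : ∀ j, j ≤ m → Differentiable ℝ (iteratedDeriv j f) := fun j hj =>
      hf.differentiable_iteratedDeriv j (by exact_mod_cast Nat.lt_succ_of_le hj)
    have hder : ∀ j, j ≤ m → ∀ x : ℝ,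
        HasDerivAt (iteratedDeriv j f) (iteratedDeriv (j + 1) f x) x := by
      intro j hj x
      rw [iteratedDeriv_succ]
      exact ((hdiff j hj) x).hasDerivAt
    have hcont : ∀ j, j ≤ m + 1 → Continuous (iteratedDeriv j f) := fun j hj =>
      hf.continuous_iteratedDeriv j (by exact_mod_cast hj)
    have hR : ∀ k, k ≤ m + 1 →
        (∫ x in a..b, iteratedDeriv (m + 1) f x * eval x p) =
        (-1 : ℝ) ^ k * ∫ x in a..b,
          iteratedDeriv (m + 1 - k) f x * eval x (derivative^[k] p) := by
      intro k
      induction k with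
      | zero => intro _; simp
      | succ k ih =>
        intro hk1
        have hkm : k ≤ m := by omega
        rw [ih (Nat.le_of_succ_le hk1)]
        set q := (derivative^[k] p) with hq
        have parts := intervalIntegral.integral_mul_deriv_eq_deriv_mul
          (u := iteratedDeriv (m - k) f) (v := fun x => eval x q)
          (u' := iteratedDeriv (m - k + 1) f) (v' := fun x => eval x (derivative q))
          (fun x _ => hder (m - k) (Nat.sub_le m k) x)
          (fun x _ => q.hasDerivAt x)
          ((hcont (m - k + 1) (by omega)).intervalIntegrable a b)
          ((derivative q).continuous.intervalIntegrable a b)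
        rw [(hf2 (m - k) (Nat.sub_le m k)).1, (hf2 (m - k) (Nat.sub_le m k)).2] at parts
        simp only [zero_mul, sub_zero, zero_sub] at parts
        have key : ∫ x in a..b, iteratedDeriv (m - k + 1) f x * eval x q
            = - ∫ x in a..b, iteratedDeriv (m - k) f x * eval x (derivative q) := by
          linarith [parts]
        rw [show m + 1 - k = (m - k) + 1 by omega, key,
          show m + 1 - (k + 1) = m - k by omega,
          Function.iterate_succ_apply' derivative k p, ← hq]
        ring
    have h0 := hR (m + 1) le_rfl
    have hdz : derivative^[m + 1] p = 0 :=
      Polynomial.iterate_derivative_eq_zero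
        (Nat.lt_succ_of_le (natDegree_le_iff_degree_le.mpr hp))
    rw [hdz] at h0
    simp only [eval_zero, mul_zero, intervalIntegral.integral_zero, mul_zero] at h0
    have hcg : (∫ x in a..b, w x * v x * eval x p)
        = ∫ x in a..b, iteratedDeriv (m + 1) f x * eval x p := by
      apply intervalIntegral.integral_congr
      intro x hx
      rw [Set.uIcc_of_le hab.le] at hx
      show w x * v x * eval x p = iteratedDeriv (m + 1) f x * eval x p
      rw [hf1 x hx]
    rw [hcg, h0]
end
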